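/- Let K be a field of characteristic ≠ 2, 3, let A be a commutative associative unital K-algebra, and let L be a finite-dimensional Lie algebra over K. A K-linear map Φ : A ⊗_K L → A ⊗_K L is a Hom-Lie structure on the current Lie algebra A ⊗_K L if and only if Φ lies in the K-linear span of the set of endomorphisms of the following two forms: (i) (multiplication by u) ⊗ φ, where u ∈ A and φ : L → L is a Hom-Lie structure on L; (ii) α ⊗ ψ, where α : A → A is a K-linear map and ψ : L → L is a K-linear map with ⁅⁅x,y⁆, ψ(z)⁆ = 0 for all x, y, z ∈ L. -/

import Mathlib

open TensorProduct LinearMap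

section HL14Aux

variable {K A L : Type*} [Field K] [CommRing A] [Algebra K A]
  [LieRing L] [LieAlgebra K L]

private def hl14jacExpr (φ : L →ₗ[K] L) (x y z : L) : L :=
  ⁅⁅x, y⁆, φ z⁆ + ⁅⁅z, x⁆, φ y⁆ + ⁅⁅y, z⁆, φ x⁆

variable (K L) in
private def hl14C : Submodule K L where
  carrier := {v | ∀ x y : L, ⁅⁅x, y⁆, v⁆ = 0}
  add_mem' := fun hv hw x y => by rw [lie_add, hv x y, hw x y, add_zero]
  zero_mem' := fun x y => lie_zero _
  smul_mem' := fun k v hv x y => by rw [lie_smul, hv x y, smul_zero]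

private lemma hl14C_mem {v : L} : v ∈ hl14C K L ↔ ∀ x y : L, ⁅⁅x, y⁆, v⁆ = 0 := Iff.rfl

variable (K L) in
private def hl14H : Submodule K (L →ₗ[K] L) where
  carrier := {φ | ∀ x y z : L, hl14jacExpr φ x y z = 0}
  add_mem' := fun {φ} {ψ} hφ hψ x y z => by
    have h1 := hφ x y z; have h2 := hψ x y z
    simp only [hl14jacExpr, LinearMap.add_apply, lie_add] at *
    calc ⁅⁅x,y⁆, φ z⁆ + ⁅⁅x,y⁆, ψ z⁆ + (⁅⁅z,x⁆, φ y⁆ + ⁅⁅z,x⁆, ψ y⁆)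
          + (⁅⁅y,z⁆, φ x⁆ + ⁅⁅y,z⁆, ψ x⁆)
        = (⁅⁅x,y⁆, φ z⁆ + ⁅⁅z,x⁆, φ y⁆ + ⁅⁅y,z⁆, φ x⁆)
          + (⁅⁅x,y⁆, ψ z⁆ + ⁅⁅z,x⁆, ψ y⁆ + ⁅⁅y,z⁆, ψ x⁆) := by abel
      _ = 0 := by rw [h1, h2, add_zero]
  zero_mem' := fun x y z => by simp [hl14jacExpr]
  smul_mem' := fun k φ hφ x y z => by
    have h1 := hφ x y z
    simp only [hl14jacExpr, LinearMap.smul_apply, lie_smul] at *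
    rw [← smul_add, ← smul_add, h1, smul_zero]

private lemma hl14H_mem {φ : L →ₗ[K] L} :
    φ ∈ hl14H K L ↔ ∀ x y z : L, hl14jacExpr φ x y z = 0 := Iff.rfl

/- trilinear extension of the Hom-Jacobi identity from a basis -/
private def hl14mz (φ : L →ₗ[K] L) (x y : L) : L →ₗ[K] L where
  toFun z := hl14jacExpr φ x y z
  map_add' z w := by simp only [hl14jacExpr, map_add, lie_add, add_lie]; abel
  map_smul' k z := by
    simp only [hl14jacExpr, map_smul, lie_smul, smul_lie, RingHom.id_apply, smul_add]

private def hl14my (φ : L →ₗ[K] L) (x z : L) : L →ₗ[K] L where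
  toFun y := hl14jacExpr φ x y z
  map_add' y w := by simp only [hl14jacExpr, map_add, lie_add, add_lie]; abel
  map_smul' k y := by
    simp only [hl14jacExpr, map_smul, lie_smul, smul_lie, RingHom.id_apply, smul_add]

private def hl14mx (φ : L →ₗ[K] L) (y z : L) : L →ₗ[K] L where
  toFun x := hl14jacExpr φ x y z
  map_add' x w := by simp only [hl14jacExpr, map_add, lie_add, add_lie]; abel
  map_smul' k x := by
    simp only [hl14jacExpr, map_smul, lie_smul, smul_lie, RingHom.id_apply, smul_add]

private lemma hl14tri_ext {n : ℕ} (b : Module.Basis (Fin n) K L) (φ : L →ₗ[K] L)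
    (h : ∀ i j k, hl14jacExpr φ (b i) (b j) (b k) = 0) :
    ∀ x y z : L, hl14jacExpr φ x y z = 0 := by
  have s1 : ∀ (i j) (z : L), hl14jacExpr φ (b i) (b j) z = 0 := fun i j z =>
    LinearMap.congr_fun (b.ext fun k => h i j k : hl14mz φ (b i) (b j) = 0) z
  have s2 : ∀ (i) (y z : L), hl14jacExpr φ (b i) y z = 0 := fun i y z =>
    LinearMap.congr_fun (b.ext fun j => s1 i j z : hl14my φ (b i) z = 0) y
  exact fun x y z =>
    LinearMap.congr_fun (b.ext fun i => s2 i y z : hl14mx φ y z = 0) x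

private def hl14cmapL (y v : L) : L →ₗ[K] L where
  toFun x := ⁅⁅x, y⁆, v⁆
  map_add' x w := by simp only [add_lie]
  map_smul' k x := by simp only [smul_lie, RingHom.id_apply]

private def hl14cmapR (x v : L) : L →ₗ[K] L where
  toFun y := ⁅⁅x, y⁆, v⁆
  map_add' y w := by simp only [lie_add, add_lie]
  map_smul' k y := by simp only [lie_smul, smul_lie, RingHom.id_apply]

private lemma hl14bil_ext {n : ℕ} (b : Module.Basis (Fin n) K L) (v : L)
    (h : ∀ i j, ⁅⁅b i, b j⁆, v⁆ = 0) : ∀ x y : L, ⁅⁅x, y⁆, v⁆ = 0 := by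
  have s1 : ∀ (i) (y : L), ⁅⁅b i, y⁆, v⁆ = 0 := fun i y =>
    LinearMap.congr_fun (b.ext fun j => h i j : hl14cmapR (K := K) (b i) v = 0) y
  exact fun x y =>
    LinearMap.congr_fun (b.ext fun i => s1 i y : hl14cmapL (K := K) y v = 0) x

/- bracket with 1 ⊗ w as lTensor of ad -/
private lemma hl14lie_one_tmul (w : L) (m : A ⊗[K] L) :
    ⁅(1:A) ⊗ₜ[K] w, m⁆ = lTensor A ((LieAlgebra.ad K L) w) m := by
  induction m using TensorProduct.induction_on with
  | zero => simp
  | tmul a v => simp [LieAlgebra.ExtendScalars.bracket_tmul]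
  | add p q hp hq => rw [lie_add, map_add, hp, hq]

private lemma hl14lie_smul_one (a : A) (w : L) (m : A ⊗[K] L) :
    ⁅(1:A) ⊗ₜ[K] w, a • m⁆ = a • ⁅(1:A) ⊗ₜ[K] w, m⁆ := by
  induction m using TensorProduct.induction_on with
  | zero => simp
  | tmul b v =>
      rw [smul_tmul', LieAlgebra.ExtendScalars.bracket_tmul,
        LieAlgebra.ExtendScalars.bracket_tmul, smul_tmul']
      simp [smul_eq_mul, mul_assoc]
  | add p q hp hq => rw [smul_add, lie_add, lie_add, hp, hq, smul_add]

private lemma hl14lie_a_tmul (a : A) (w : L) (m : A ⊗[K] L) :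
    ⁅a ⊗ₜ[K] w, m⁆ = a • ⁅(1:A) ⊗ₜ[K] w, m⁆ := by
  induction m using TensorProduct.induction_on with
  | zero => simp
  | tmul b v =>
      rw [LieAlgebra.ExtendScalars.bracket_tmul, LieAlgebra.ExtendScalars.bracket_tmul,
        smul_tmul']
      simp [smul_eq_mul]
  | add p q hp hq => rw [lie_add, lie_add, hp, hq, smul_add]

/- components of lTensor of a pi map -/
private lemma hl14pi_comp {V W : Type*} [AddCommGroup V] [Module K V]
    [AddCommGroup W] [Module K W] {P : Type*} [Fintype P] [DecidableEq P]
    (g : P → (V →ₗ[K] W)) (m : A ⊗[K] V) (p : P) :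
    piRightHom K K A (fun _ : P => W) (lTensor A (LinearMap.pi g) m) p
      = lTensor A (g p) m := by
  induction m using TensorProduct.induction_on with
  | zero => simp
  | tmul a v => simp
  | add s r hs hr => simp [hs, hr]

/- flatness: kernel condition gives range membership -/
private lemma hl14mem_range {V W : Type*} [AddCommGroup V] [Module K V]
    [AddCommGroup W] [Module K W] (U : Submodule K V) (g : V →ₗ[K] W)
    (hker : LinearMap.ker g = U) (m : A ⊗[K] V) (hm : lTensor A g m = 0) :
    m ∈ LinearMap.range (lTensor A U.subtype) := by
  have hex : Function.Exact U.subtype g := LinearMap.exact_iff.mpr (by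
    rw [hker, Submodule.range_subtype])
  obtain ⟨x, hx⟩ := (Module.Flat.lTensor_exact A hex m).mp hm
  exact ⟨x, hx⟩

variable (K A L) in
/-- u ⊗ φ ↦ map (mulLeft u) φ -/
private noncomputable def hl14gam :
    A ⊗[K] (L →ₗ[K] L) →ₗ[K] (A ⊗[K] L →ₗ[K] A ⊗[K] L) :=
  TensorProduct.lift
    { toFun := fun u =>
        { toFun := fun φ => TensorProduct.map (LinearMap.mulLeft K u) φ
          map_add' := fun φ ψ => by
            apply TensorProduct.ext'; intro a x
            simp [tmul_add]
          map_smul' := fun k φ => by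
            apply TensorProduct.ext'; intro a x
            simp [tmul_smul] }
      map_add' := fun u v => by
        apply LinearMap.ext; intro φ
        apply TensorProduct.ext'; intro a x
        simp only [LinearMap.coe_mk, AddHom.coe_mk, LinearMap.add_apply, map_tmul,
          mulLeft_apply, add_mul, add_tmul]
      map_smul' := fun k u => by
        apply LinearMap.ext; intro φ
        apply TensorProduct.ext'; intro a x
        simp only [LinearMap.coe_mk, AddHom.coe_mk, RingHom.id_apply, LinearMap.smul_apply,
          map_tmul, mulLeft_apply]
        rw [Algebra.smul_mul_assoc, smul_tmul'] }

@[simp] private lemma hl14gam_tmul (u : A) (φ : L →ₗ[K] L) (a : A) (x : L) :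
    hl14gam K A L (u ⊗ₜ φ) (a ⊗ₜ x) = (u * a) ⊗ₜ φ x := rfl

private lemma hl14gam_apply_tmul (s : A ⊗[K] (L →ₗ[K] L)) (a : A) (x : L) :
    hl14gam K A L s (a ⊗ₜ[K] x) = a • (lTensorHomToHomLTensor (RingHom.id K) L A L s x) := by
  induction s using TensorProduct.induction_on with
  | zero => simp
  | tmul u φ =>
      rw [hl14gam_tmul, lTensorHomToHomLTensor_apply, smul_tmul', smul_eq_mul, mul_comm]
  | add p q hp hq => simp only [map_add, LinearMap.add_apply, hp, hq, smul_add]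

private lemma hl14lTensor_applyAt (x : L) (s : A ⊗[K] (L →ₗ[K] L)) :
    lTensor A (LinearMap.applyₗ x) s = lTensorHomToHomLTensor (RingHom.id K) L A L s x := by
  induction s using TensorProduct.induction_on with
  | zero => simp
  | tmul u φ => simp
  | add p q hp hq => simp [hp, hq]

/- the trilinear tensor induction for the easy direction -/
private lemma hl14tensor_tri (Φ : A ⊗[K] L →ₗ[K] A ⊗[K] L)
    (h : ∀ (a c d : A) (x y z : L),
      ⁅⁅a ⊗ₜ[K] x, c ⊗ₜ[K] y⁆, Φ (d ⊗ₜ[K] z)⁆ + ⁅⁅d ⊗ₜ[K] z, a ⊗ₜ[K] x⁆, Φ (c ⊗ₜ[K] y)⁆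
        + ⁅⁅c ⊗ₜ[K] y, d ⊗ₜ[K] z⁆, Φ (a ⊗ₜ[K] x)⁆ = 0) :
    ∀ p q r : A ⊗[K] L, ⁅⁅p, q⁆, Φ r⁆ + ⁅⁅r, p⁆, Φ q⁆ + ⁅⁅q, r⁆, Φ p⁆ = 0 := by
  intro p
  induction p using TensorProduct.induction_on with
  | zero => intro q r; simp
  | tmul a x =>
      intro q
      induction q using TensorProduct.induction_on with
      | zero => intro r; simp
      | tmul c y =>
          intro r
          induction r using TensorProduct.induction_on with
          | zero => simp
          | tmul d z => exact h a c d x y z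
          | add r1 r2 ih1 ih2 =>
              calc ⁅⁅a ⊗ₜ[K] x, c ⊗ₜ[K] y⁆, Φ (r1 + r2)⁆
                    + ⁅⁅r1 + r2, a ⊗ₜ[K] x⁆, Φ (c ⊗ₜ[K] y)⁆
                    + ⁅⁅c ⊗ₜ[K] y, r1 + r2⁆, Φ (a ⊗ₜ[K] x)⁆
                  = (⁅⁅a ⊗ₜ[K] x, c ⊗ₜ[K] y⁆, Φ r1⁆ + ⁅⁅r1, a ⊗ₜ[K] x⁆, Φ (c ⊗ₜ[K] y)⁆
                    + ⁅⁅c ⊗ₜ[K] y, r1⁆, Φ (a ⊗ₜ[K] x)⁆)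
                  + (⁅⁅a ⊗ₜ[K] x, c ⊗ₜ[K] y⁆, Φ r2⁆ + ⁅⁅r2, a ⊗ₜ[K] x⁆, Φ (c ⊗ₜ[K] y)⁆
                    + ⁅⁅c ⊗ₜ[K] y, r2⁆, Φ (a ⊗ₜ[K] x)⁆) := by
                    simp only [map_add, lie_add, add_lie]; abel
                _ = 0 := by rw [ih1, ih2, add_zero]
      | add q1 q2 ih1 ih2 =>
          intro r
          calc ⁅⁅a ⊗ₜ[K] x, q1 + q2⁆, Φ r⁆ + ⁅⁅r, a ⊗ₜ[K] x⁆, Φ (q1 + q2)⁆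
                + ⁅⁅q1 + q2, r⁆, Φ (a ⊗ₜ[K] x)⁆
              = (⁅⁅a ⊗ₜ[K] x, q1⁆, Φ r⁆ + ⁅⁅r, a ⊗ₜ[K] x⁆, Φ q1⁆ + ⁅⁅q1, r⁆, Φ (a ⊗ₜ[K] x)⁆)
              + (⁅⁅a ⊗ₜ[K] x, q2⁆, Φ r⁆ + ⁅⁅r, a ⊗ₜ[K] x⁆, Φ q2⁆
                + ⁅⁅q2, r⁆, Φ (a ⊗ₜ[K] x)⁆) := by
                simp only [map_add, lie_add, add_lie]; abel
            _ = 0 := by rw [ih1 r, ih2 r, add_zero]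
  | add p1 p2 ih1 ih2 =>
      intro q r
      calc ⁅⁅p1 + p2, q⁆, Φ r⁆ + ⁅⁅r, p1 + p2⁆, Φ q⁆ + ⁅⁅q, r⁆, Φ (p1 + p2)⁆
          = (⁅⁅p1, q⁆, Φ r⁆ + ⁅⁅r, p1⁆, Φ q⁆ + ⁅⁅q, r⁆, Φ p1⁆)
          + (⁅⁅p2, q⁆, Φ r⁆ + ⁅⁅r, p2⁆, Φ q⁆ + ⁅⁅q, r⁆, Φ p2⁆) := by
            simp only [map_add, lie_add, add_lie]; abel
        _ = 0 := by rw [ih1 q r, ih2 q r, add_zero]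

variable (K L) in
private noncomputable def hl14Gmap {n : ℕ} (b : Module.Basis (Fin n) K L) :
    L →ₗ[K] (Fin n × Fin n → L) :=
  LinearMap.pi fun p => ((LieAlgebra.ad K L) ⁅b p.1, b p.2⁆)

variable (K L) in
private noncomputable def hl14Jmap {n : ℕ} (b : Module.Basis (Fin n) K L) :
    (L →ₗ[K] L) →ₗ[K] (Fin n × Fin n × Fin n → L) :=
  LinearMap.pi fun p =>
    ((LieAlgebra.ad K L) ⁅b p.1, b p.2.1⁆) ∘ₗ LinearMap.applyₗ (b p.2.2)
    + ((LieAlgebra.ad K L) ⁅b p.2.2, b p.1⁆) ∘ₗ LinearMap.applyₗ (b p.2.1)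
    + ((LieAlgebra.ad K L) ⁅b p.2.1, b p.2.2⁆) ∘ₗ LinearMap.applyₗ (b p.1)

private lemma hl14Jmap_apply {n : ℕ} (b : Module.Basis (Fin n) K L) (φ : L →ₗ[K] L)
    (p : Fin n × Fin n × Fin n) :
    hl14Jmap K L b φ p = hl14jacExpr φ (b p.1) (b p.2.1) (b p.2.2) := by
  simp [hl14Jmap, hl14jacExpr, LieAlgebra.ad_apply]

private lemma hl14Gmap_apply {n : ℕ} (b : Module.Basis (Fin n) K L) (v : L) (p : Fin n × Fin n) :
    hl14Gmap K L b v p = ⁅⁅b p.1, b p.2⁆, v⁆ := by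
  simp [hl14Gmap, LieAlgebra.ad_apply]

end HL14Aux

set_option maxHeartbeats 2000000 in
set_option synthInstance.maxHeartbeats 400000 in
theorem homLie_current_description (K A L : Type*) [Field K] [CommRing A] [Algebra K A]
    [LieRing L] [LieAlgebra K L] [Module.Finite K L]
    (h2 : (2 : K) ≠ 0) (h3 : (3 : K) ≠ 0)
    (Φ : A ⊗[K] L →ₗ[K] A ⊗[K] L) :
    (∀ p q r : A ⊗[K] L, ⁅⁅p, q⁆, Φ r⁆ + ⁅⁅r, p⁆, Φ q⁆ + ⁅⁅q, r⁆, Φ p⁆ = 0) ↔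
      Φ ∈ Submodule.span K
        { P : A ⊗[K] L →ₗ[K] A ⊗[K] L |
          (∃ (u : A) (φ : L →ₗ[K] L),
            (∀ x y z : L, ⁅⁅x, y⁆, φ z⁆ + ⁅⁅z, x⁆, φ y⁆ + ⁅⁅y, z⁆, φ x⁆ = 0) ∧
            P = TensorProduct.map (LinearMap.mulLeft K u) φ) ∨
          (∃ (α : A →ₗ[K] A) (ψ : L →ₗ[K] L),
            (∀ x y z : L, ⁅⁅x, y⁆, ψ z⁆ = 0) ∧
            P = TensorProduct.map α ψ) } := by
  classical
  constructor
  · intro h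
    set S : Set (A ⊗[K] L →ₗ[K] A ⊗[K] L) :=
      { P : A ⊗[K] L →ₗ[K] A ⊗[K] L |
        (∃ (u : A) (φ : L →ₗ[K] L),
          (∀ x y z : L, ⁅⁅x, y⁆, φ z⁆ + ⁅⁅z, x⁆, φ y⁆ + ⁅⁅y, z⁆, φ x⁆ = 0) ∧
          P = TensorProduct.map (LinearMap.mulLeft K u) φ) ∨
        (∃ (α : A →ₗ[K] A) (ψ : L →ₗ[K] L),
          (∀ x y z : L, ⁅⁅x, y⁆, ψ z⁆ = 0) ∧
          P = TensorProduct.map α ψ) } with hSdef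
    set n := Module.finrank K L with hn
    set b : Module.Basis (Fin n) K L := Module.finBasis K L with hb
    set f : L →ₗ[K] A ⊗[K] L := Φ ∘ₗ ((TensorProduct.mk K A L) 1) with hfdef
    set t : A ⊗[K] (L →ₗ[K] L) := (lTensorHomEquivHomLTensor K L A L).symm f with htdef
    have ht : lTensorHomToHomLTensor (RingHom.id K) L A L t = f := by
      rw [htdef, ← lTensorHomEquivHomLTensor_apply]
      exact (lTensorHomEquivHomLTensor K L A L).apply_symm_apply f
    have hI : ∀ x y z : L,
        ⁅(1:A) ⊗ₜ[K] ⁅x, y⁆, Φ ((1:A) ⊗ₜ[K] z)⁆ + ⁅(1:A) ⊗ₜ[K] ⁅z, x⁆, Φ ((1:A) ⊗ₜ[K] y)⁆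
          + ⁅(1:A) ⊗ₜ[K] ⁅y, z⁆, Φ ((1:A) ⊗ₜ[K] x)⁆ = 0 := by
      intro x y z
      have hh := h ((1:A) ⊗ₜ[K] x) ((1:A) ⊗ₜ[K] y) ((1:A) ⊗ₜ[K] z)
      simpa only [LieAlgebra.ExtendScalars.bracket_tmul, one_mul] using hh
    -- kernel identity for J
    have hkerJ : LinearMap.ker (hl14Jmap K L b) = hl14H K L := by
      ext φ
      simp only [LinearMap.mem_ker, hl14H_mem]
      constructor
      · intro h0
        refine hl14tri_ext b φ (fun i j k => ?_)
        have hc := congrFun h0 (i, j, k)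
        rwa [hl14Jmap_apply, Pi.zero_apply] at hc
      · intro hφ
        funext p
        rw [hl14Jmap_apply, Pi.zero_apply]
        exact hφ _ _ _
    have hJt : lTensor A (hl14Jmap K L b) t = 0 := by
      apply (TensorProduct.piRight K K A (fun _ : Fin n × Fin n × Fin n => L)).injective
      rw [map_zero, piRight_apply]
      funext p
      rw [show hl14Jmap K L b = LinearMap.pi fun p =>
          ((LieAlgebra.ad K L) ⁅b p.1, b p.2.1⁆) ∘ₗ LinearMap.applyₗ (b p.2.2)
          + ((LieAlgebra.ad K L) ⁅b p.2.2, b p.1⁆) ∘ₗ LinearMap.applyₗ (b p.2.1)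
          + ((LieAlgebra.ad K L) ⁅b p.2.1, b p.2.2⁆) ∘ₗ LinearMap.applyₗ (b p.1) from rfl,
        hl14pi_comp, Pi.zero_apply]
      rw [lTensor_add, lTensor_add, lTensor_comp, lTensor_comp, lTensor_comp]
      simp only [LinearMap.add_apply, LinearMap.coe_comp, Function.comp_apply]
      rw [hl14lTensor_applyAt, hl14lTensor_applyAt, hl14lTensor_applyAt, ht,
        ← hl14lie_one_tmul, ← hl14lie_one_tmul, ← hl14lie_one_tmul]
      exact hI (b p.1) (b p.2.1) (b p.2.2)
    obtain ⟨t', ht'⟩ := hl14mem_range (hl14H K L) (hl14Jmap K L b) hkerJ t hJt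
    -- first part of the span membership
    have hspan1 : ∀ s : A ⊗[K] ↥(hl14H K L),
        hl14gam K A L (lTensor A (hl14H K L).subtype s) ∈ Submodule.span K S := by
      intro s
      induction s using TensorProduct.induction_on with
      | zero => rw [map_zero, map_zero]; exact Submodule.zero_mem _
      | tmul u φ =>
          rw [lTensor_tmul]
          refine Submodule.subset_span (Or.inl ⟨u, (φ : L →ₗ[K] L),
            fun x y z => φ.2 x y z, ?_⟩)
          rfl
      | add s r hs hr => rw [map_add, map_add]; exact Submodule.add_mem _ hs hr
    set Φ₂ : A ⊗[K] L →ₗ[K] A ⊗[K] L := Φ - hl14gam K A L t with hP2def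
    have hkey : ∀ (v : A ⊗[K] L) (x y : L), ⁅(1:A) ⊗ₜ[K] ⁅x, y⁆, Φ₂ v⁆ = 0 := by
      intro v
      induction v using TensorProduct.induction_on with
      | zero => intro x y; simp
      | tmul a w =>
          intro x y
          have hg : hl14gam K A L t (a ⊗ₜ[K] w) = a • Φ ((1:A) ⊗ₜ[K] w) := by
            rw [hl14gam_apply_tmul, ht]; rfl
          have h1 := h (a ⊗ₜ[K] w) ((1:A) ⊗ₜ[K] x) ((1:A) ⊗ₜ[K] y)
          simp only [LieAlgebra.ExtendScalars.bracket_tmul, mul_one, one_mul] at h1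
          rw [hl14lie_a_tmul a ⁅w, x⁆, hl14lie_a_tmul a ⁅y, w⁆, ← smul_add] at h1
          have hIw := hI w x y
          rw [eq_neg_of_add_eq_zero_left hIw, smul_neg] at h1
          have h3 := neg_add_eq_zero.mp h1
          rw [hP2def, LinearMap.sub_apply, hg, lie_sub, hl14lie_smul_one, ← h3, sub_self]
      | add v1 v2 ih1 ih2 => intro x y; rw [map_add, lie_add, ih1 x y, ih2 x y, add_zero]
    have hkerG : LinearMap.ker (hl14Gmap K L b) = hl14C K L := by
      ext v
      simp only [LinearMap.mem_ker, hl14C_mem]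
      constructor
      · intro h0
        refine hl14bil_ext b v (fun i j => ?_)
        have hc := congrFun h0 (i, j)
        rwa [hl14Gmap_apply, Pi.zero_apply] at hc
      · intro hv
        funext p
        rw [hl14Gmap_apply, Pi.zero_apply]
        exact hv _ _
    have hrange : ∀ v, Φ₂ v ∈ LinearMap.range (lTensor A (hl14C K L).subtype) := by
      intro v
      apply hl14mem_range _ _ hkerG
      apply (TensorProduct.piRight K K A (fun _ : Fin n × Fin n => L)).injective
      rw [map_zero, piRight_apply]
      funext p
      rw [show hl14Gmap K L b = LinearMap.pi fun p : Fin n × Fin n =>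
          ((LieAlgebra.ad K L) ⁅b p.1, b p.2⁆) from rfl, hl14pi_comp, Pi.zero_apply,
        ← hl14lie_one_tmul]
      exact hkey v (b p.1) (b p.2)
    -- decompose Φ₂
    set m := Module.finrank K ↥(hl14C K L) with hm
    set c : Module.Basis (Fin m) K ↥(hl14C K L) := Module.finBasis K ↥(hl14C K L) with hc
    have injC : Function.Injective (lTensor A (hl14C K L).subtype) :=
      Module.Flat.lTensor_preserves_injective_linearMap _ (hl14C K L).injective_subtype
    set eC : (A ⊗[K] ↥(hl14C K L)) ≃ₗ[K] LinearMap.range (lTensor A (hl14C K L).subtype) :=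
      LinearEquiv.ofInjective _ injC with heC
    set Θ : Fin n → (A →ₗ[K] A ⊗[K] ↥(hl14C K L)) := fun j =>
      eC.symm.toLinearMap ∘ₗ LinearMap.codRestrict _
        (Φ₂ ∘ₗ (TensorProduct.mk K A L).flip (b j)) (fun a => hrange _) with hΘdef
    have hΘ : ∀ (j : Fin n) (a : A),
        lTensor A (hl14C K L).subtype (Θ j a) = Φ₂ (a ⊗ₜ[K] b j) := by
      intro j a
      have h1 : ∀ y : LinearMap.range (lTensor A (hl14C K L).subtype),
          lTensor A (hl14C K L).subtype (eC.symm y) = (y : A ⊗[K] L) := fun y =>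
        calc lTensor A (hl14C K L).subtype (eC.symm y)
            = ((eC (eC.symm y) : LinearMap.range (lTensor A (hl14C K L).subtype)) : A ⊗[K] L) :=
              (LinearEquiv.ofInjective_apply (lTensor A (hl14C K L).subtype) (eC.symm y)).symm
          _ = (y : A ⊗[K] L) := by rw [eC.apply_symm_apply]
      exact h1 _
    set Bc : Module.Basis (Fin m) A (A ⊗[K] ↥(hl14C K L)) := Module.Basis.baseChange A c with hBc
    set β : Fin m → Fin n → (A →ₗ[K] A) := fun k j =>
      (Bc.coord k).restrictScalars K ∘ₗ Θ j with hβ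
    set ψm : Fin m → Fin n → (L →ₗ[K] L) := fun k j =>
      (b.coord j).smulRight ((hl14C K L).subtype (c k)) with hψm
    have hrepr : ∀ (j : Fin n) (a : A),
        Φ₂ (a ⊗ₜ[K] b j) = ∑ k, (β k j a) ⊗ₜ[K] ((c k : L)) := by
      intro j a
      calc Φ₂ (a ⊗ₜ[K] b j) = lTensor A (hl14C K L).subtype (Θ j a) := (hΘ j a).symm
        _ = lTensor A (hl14C K L).subtype (∑ k, Bc.repr (Θ j a) k • Bc k) := by
            rw [Module.Basis.sum_repr]
        _ = ∑ k, (β k j a) ⊗ₜ[K] ((c k : L)) := by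
            rw [map_sum]
            refine Finset.sum_congr rfl (fun k _ => ?_)
            rw [Module.Basis.baseChange_apply, smul_tmul', smul_eq_mul, mul_one, lTensor_tmul]
            rfl
    have hdecomp : Φ₂ = ∑ k, ∑ j, TensorProduct.map (β k j) (ψm k j) := by
      apply TensorProduct.ext'
      intro a x
      have hL : Φ₂ (a ⊗ₜ[K] x)
          = ∑ j, ∑ k, b.repr x j • ((β k j a) ⊗ₜ[K] ((c k : L))) := by
        conv_lhs => rw [← Module.Basis.sum_repr b x, tmul_sum, map_sum]
        refine Finset.sum_congr rfl (fun j _ => ?_)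
        rw [tmul_smul, map_smul, hrepr j a, Finset.smul_sum]
      have hR : (∑ k, ∑ j, TensorProduct.map (β k j) (ψm k j)) (a ⊗ₜ[K] x)
          = ∑ k, ∑ j, b.repr x j • ((β k j a) ⊗ₜ[K] ((c k : L))) := by
        simp only [LinearMap.coe_sum, Finset.sum_apply, map_tmul]
        refine Finset.sum_congr rfl (fun k _ => Finset.sum_congr rfl (fun j _ => ?_))
        rw [hψm]
        rw [LinearMap.smulRight_apply, tmul_smul, Module.Basis.coord_apply]
        rfl
      rw [hL, hR, Finset.sum_comm]
    have hspan2 : Φ₂ ∈ Submodule.span K S := by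
      rw [hdecomp]
      refine Submodule.sum_mem _ (fun k _ => Submodule.sum_mem _ (fun j _ => ?_))
      refine Submodule.subset_span (Or.inr ⟨β k j, ψm k j, fun x y z => ?_, rfl⟩)
      rw [hψm]
      simp only [LinearMap.smulRight_apply, Submodule.subtype_apply]
      rw [lie_smul, (c k).2 x y, smul_zero]
    have hfinal : Φ = hl14gam K A L t + Φ₂ := by rw [hP2def]; abel
    rw [hfinal]
    refine Submodule.add_mem _ ?_ hspan2
    rw [← ht']
    exact hspan1 t'
  · -- easy direction
    intro hspan
    induction hspan using Submodule.span_induction with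
    | mem P hP =>
        rcases hP with ⟨u, φ, hφ, rfl⟩ | ⟨α, ψ, hψ, rfl⟩
        · refine hl14tensor_tri _ (fun a c d x y z => ?_)
          simp only [map_tmul, mulLeft_apply, LieAlgebra.ExtendScalars.bracket_tmul]
          rw [show a * c * (u * d) = a * (c * (d * u)) by ring,
            show d * a * (u * c) = a * (c * (d * u)) by ring,
            show c * d * (u * a) = a * (c * (d * u)) by ring,
            ← tmul_add, ← tmul_add, hφ x y z, tmul_zero]
        · refine hl14tensor_tri _ (fun a c d x y z => ?_)
          simp only [map_tmul, LieAlgebra.ExtendScalars.bracket_tmul, hψ, tmul_zero,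
            add_zero, zero_add]
    | zero => intro p q r; simp
    | add Ψ Θ _ _ hΨ hΘ =>
        intro p q r
        have h1 := hΨ p q r; have h2 := hΘ p q r
        simp only [LinearMap.add_apply, lie_add]
        calc ⁅⁅p,q⁆, Ψ r⁆ + ⁅⁅p,q⁆, Θ r⁆ + (⁅⁅r,p⁆, Ψ q⁆ + ⁅⁅r,p⁆, Θ q⁆)
              + (⁅⁅q,r⁆, Ψ p⁆ + ⁅⁅q,r⁆, Θ p⁆)
            = (⁅⁅p,q⁆, Ψ r⁆ + ⁅⁅r,p⁆, Ψ q⁆ + ⁅⁅q,r⁆, Ψ p⁆)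
              + (⁅⁅p,q⁆, Θ r⁆ + ⁅⁅r,p⁆, Θ q⁆ + ⁅⁅q,r⁆, Θ p⁆) := by abel
          _ = 0 := by rw [h1, h2, add_zero]
    | smul k Ψ _ hΨ =>
        intro p q r
        have h1 := hΨ p q r
        have hsm : ∀ u v : A ⊗[K] L, ⁅u, k • v⁆ = k • ⁅u, v⁆ := fun u v => by
          rw [← algebraMap_smul A k v, lie_smul, algebraMap_smul]
        simp only [LinearMap.smul_apply, hsm]
        rw [← smul_add, ← smul_add, h1, smul_zero]
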